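/- Let X be a nontrivial circulant p-graph of type k, with adjacency matrix d_X regarded as a complex p×p matrix. Then every eigenspace of d_X other than the line spanned by the all-ones vector has dimension k, and d_X has exactly (p−1)/k + 1 distinct eigenvalues. -/

import Mathlib

set_option linter.unusedSectionVars false


open Polynomial in
lemma const_coeffs {p : ℕ} (hp : p.Prime) {ω : ℂ} (hω : IsPrimitiveRoot ω p)
    (c : ℕ → ℚ) (h : ∑ i ∈ Finset.range p, (c i : ℂ) * ω ^ i = 0) :
    ∀ i < p, c i = c 0 := by
  set q : ℚ[X] := ∑ i ∈ Finset.range p, C (c i) * X ^ i with hq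
  have hcoeff : ∀ j, q.coeff j = if j ∈ Finset.range p then c j else 0 := by
    intro j
    rw [hq, finset_sum_coeff]
    simp only [coeff_C_mul, coeff_X_pow, mul_ite, mul_one, mul_zero]
    simp [Finset.sum_ite_eq (Finset.range p) j (fun i => c i)]
  have haev : aeval ω q = 0 := by
    rw [hq, map_sum]
    simp only [map_mul, aeval_C, map_pow, aeval_X]
    simpa using h
  have hmin : minpoly ℚ ω = cyclotomic p ℚ := (cyclotomic_eq_minpoly_rat hω hp.pos).symm
  have hdvd : cyclotomic p ℚ ∣ q := hmin ▸ minpoly.dvd ℚ ω haev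
  obtain ⟨r, hr⟩ := hdvd
  have hdegcyc : (cyclotomic p ℚ).natDegree = p - 1 := by
    rw [natDegree_cyclotomic, Nat.totient_prime hp]
  rcases eq_or_ne q 0 with h0 | h0
  · intro i hi
    have := hcoeff i
    have h2 := hcoeff 0
    rw [h0] at this h2
    simp [Finset.mem_range, hi, hp.pos] at this h2
    rw [← this, ← h2]
  · have hr0 : r ≠ 0 := by rintro rfl; simp at hr; exact h0 hr
    have hc0 : cyclotomic p ℚ ≠ 0 := cyclotomic_ne_zero p ℚ
    have hdegq : q.natDegree < p := by
      have : q.natDegree ≤ p - 1 := by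
        apply natDegree_le_iff_coeff_eq_zero.mpr
        intro j hj
        rw [hcoeff j]
        have : ¬ (j ∈ Finset.range p) := by
          simp only [Finset.mem_range, not_lt]
          omega
        simp [this]
      have := hp.pos
      omega
    have hdeg : q.natDegree = (cyclotomic p ℚ).natDegree + r.natDegree := by
      rw [hr, natDegree_mul hc0 hr0]
    have hrdeg : r.natDegree = 0 := by
      rw [hdegcyc] at hdeg
      have := hp.two_le
      omega
    obtain ⟨a, rfl⟩ := natDegree_eq_zero.mp hrdeg
    haveI : Fact p.Prime := ⟨hp⟩
    have hq2 : q = ∑ i ∈ Finset.range p, C a * X ^ i := by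
      rw [hr, cyclotomic_prime ℚ p, Finset.sum_mul]
      exact Finset.sum_congr rfl fun i _ => mul_comm _ _
    have hcoeff2 : ∀ j ∈ Finset.range p, q.coeff j = a := by
      intro j hj
      rw [hq2, finset_sum_coeff]
      simp only [coeff_C_mul, coeff_X_pow, mul_ite, mul_one, mul_zero]
      simp [Finset.sum_ite_eq (Finset.range p) j (fun _ => a), hj]
    intro i hi
    have h1 := hcoeff i
    have h2 := hcoeff 0
    rw [hcoeff2 i (by simpa using hi)] at h1
    rw [hcoeff2 0 (by simpa using hp.pos)] at h2
    simp only [Finset.mem_range, hi, hp.pos, if_pos] at h1 h2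
    rw [← h1, ← h2]

lemma const_coeffs_zmod {p : ℕ} [NeZero p] (hp : p.Prime) {ω : ℂ} (hω : IsPrimitiveRoot ω p)
    (c : ZMod p → ℚ) (h : ∑ t : ZMod p, (c t : ℂ) * ω ^ t.val = 0) :
    ∀ t, c t = c 0 := by
  have key : ∀ i < p, c (i : ZMod p) = c ((0 : ℕ) : ZMod p) := by
    apply const_coeffs hp hω
    rw [← h]
    rw [← Fin.sum_univ_eq_sum_range]
    apply Fintype.sum_bijective (fun i : Fin p => ((i : ℕ) : ZMod p))
    · constructor
      · intro i j hij
        have : ((i : ℕ) : ZMod p).val = ((j : ℕ) : ZMod p).val := congrArg ZMod.val hij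
        rw [ZMod.val_cast_of_lt i.isLt, ZMod.val_cast_of_lt j.isLt] at this
        exact Fin.ext this
      · intro t; exact ⟨⟨t.val, t.val_lt⟩, by simp [ZMod.natCast_val, ZMod.cast_id]⟩
    · intro i
      rw [ZMod.val_cast_of_lt i.isLt]
  intro t
  have := key t.val t.val_lt
  simpa [ZMod.natCast_val, ZMod.cast_id] using this

lemma finset_eq_of_sum_eq {p : ℕ} [NeZero p] (hp : p.Prime) {ω : ℂ} (hω : IsPrimitiveRoot ω p)
    {A B : Finset (ZMod p)} (hA : (0 : ZMod p) ∉ A) (hB : (0 : ZMod p) ∉ B)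
    (h : ∑ t ∈ A, ω ^ t.val = ∑ t ∈ B, ω ^ t.val) : A = B := by
  set c : ZMod p → ℚ := fun t => (if t ∈ A then 1 else 0) - (if t ∈ B then 1 else 0) with hc
  have expand : ∀ t : ZMod p, (c t : ℂ) * ω ^ t.val =
      (if t ∈ A then ω ^ t.val else 0) - (if t ∈ B then ω ^ t.val else 0) := by
    intro t; simp only [hc]; split_ifs <;> push_cast <;> ring
  have hsum : ∑ t : ZMod p, (c t : ℂ) * ω ^ t.val = 0 := by
    rw [Finset.sum_congr rfl (fun t _ => expand t), Finset.sum_sub_distrib,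
      Finset.sum_ite_mem, Finset.sum_ite_mem]
    simp [Finset.univ_inter, h]
  have hconst := const_coeffs_zmod hp hω c hsum
  have hc0 : c 0 = 0 := by simp [hc, hA, hB]
  ext t
  have := hconst t
  rw [hc0] at this
  simp only [hc] at this
  by_cases h1 : t ∈ A <;> by_cases h2 : t ∈ B <;> simp_all

lemma sum_ne_card {p : ℕ} [NeZero p] (hp : p.Prime) {ω : ℂ} (hω : IsPrimitiveRoot ω p)
    {A : Finset (ZMod p)} (hA : (0 : ZMod p) ∉ A) {n : ℕ} (hn : n ≠ 0) :
    ∑ t ∈ A, ω ^ t.val ≠ (n : ℂ) := by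
  haveI : Fact p.Prime := ⟨hp⟩
  intro h
  set c : ZMod p → ℚ := fun t => (if t ∈ A then 1 else 0) - (if t = 0 then (n : ℚ) else 0) with hc
  have expand : ∀ t : ZMod p, (c t : ℂ) * ω ^ t.val =
      (if t ∈ A then ω ^ t.val else 0) - (if t = 0 then (n : ℂ) * ω ^ t.val else 0) := by
    intro t; simp only [hc]; split_ifs <;> push_cast <;> ring
  have hsum : ∑ t : ZMod p, (c t : ℂ) * ω ^ t.val = 0 := by
    rw [Finset.sum_congr rfl (fun t _ => expand t), Finset.sum_sub_distrib,
      Finset.sum_ite_mem, Finset.sum_ite_eq' Finset.univ (0 : ZMod p)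
        (fun t => (n : ℂ) * ω ^ t.val)]
    simp [Finset.univ_inter, h, ZMod.val_zero]
  have hconst := const_coeffs_zmod hp hω c hsum
  have hc0 : c 0 = -(n : ℚ) := by simp [hc, hA]
  have hone : ((1 : ZMod p) ≠ 0) := one_ne_zero
  have h1 := hconst 1
  rw [hc0] at h1
  simp only [hc, if_neg hone, sub_zero] at h1
  have hn1 : (1 : ℚ) ≤ (n : ℚ) := by exact_mod_cast Nat.one_le_iff_ne_zero.mpr hn
  by_cases hmem : (1 : ZMod p) ∈ A
  · simp [hmem] at h1; linarith
  · simp [hmem] at h1; exact hn h1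


section
variable {p : ℕ} [NeZero p] {ω : ℂ}

lemma pow_val_mod (hω : IsPrimitiveRoot ω p) (m : ℕ) : ω ^ (m % p) = ω ^ m := by
  conv_rhs => rw [← Nat.div_add_mod m p, pow_add, pow_mul, hω.pow_eq_one, one_pow, one_mul]

lemma e_add (hω : IsPrimitiveRoot ω p) (x y : ZMod p) :
    ω ^ (x + y).val = ω ^ x.val * ω ^ y.val := by
  rw [ZMod.val_add, pow_val_mod hω, pow_add]

lemma e_mul_val (hω : IsPrimitiveRoot ω p) (x y : ZMod p) :
    ω ^ (x * y).val = (ω ^ x.val) ^ y.val := by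
  rw [ZMod.val_mul, pow_val_mod hω, pow_mul]

/-- The character matrix. -/
noncomputable def W (p : ℕ) [NeZero p] (ω : ℂ) : Matrix (ZMod p) (ZMod p) ℂ :=
  fun a j => ω ^ (a * j).val

noncomputable def zmodFinEquiv (p : ℕ) [NeZero p] : ZMod p ≃ Fin p where
  toFun t := ⟨t.val, t.val_lt⟩
  invFun i := ((i : ℕ) : ZMod p)
  left_inv t := by simp [ZMod.natCast_val, ZMod.cast_id]
  right_inv i := Fin.ext (ZMod.val_cast_of_lt i.isLt)

lemma W_isUnit (hω : IsPrimitiveRoot ω p) : IsUnit (W p ω) := by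
  have hdet : (W p ω).det ≠ 0 := by
    have hW : W p ω =
        (Matrix.vandermonde (fun i : Fin p => ω ^ (i : ℕ))).submatrix
          (zmodFinEquiv p) (zmodFinEquiv p) := by
      ext a j
      simp [W, Matrix.vandermonde, zmodFinEquiv, e_mul_val hω, Matrix.submatrix_apply]
    rw [hW, Matrix.det_submatrix_equiv_self]
    rw [Matrix.det_vandermonde_ne_zero_iff]
    intro i j hij
    exact Fin.ext (hω.pow_inj i.isLt j.isLt hij)
  exact (Matrix.isUnit_iff_isUnit_det _).mpr (Ne.isUnit hdet)

lemma rows_li (hω : IsPrimitiveRoot ω p) :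
    LinearIndependent ℂ (fun a : ZMod p => (W p ω) a) :=
  Matrix.linearIndependent_rows_iff_isUnit.mpr (W_isUnit hω)

noncomputable def charBasis (hω : IsPrimitiveRoot ω p) : Module.Basis (ZMod p) ℂ (ZMod p → ℂ) :=
  basisOfLinearIndependentOfCardEqFinrank (rows_li hω)
    (by simp [Module.finrank_pi, ZMod.card])

lemma charBasis_apply (hω : IsPrimitiveRoot ω p) (a : ZMod p) :
    charBasis hω a = fun j => ω ^ (a * j).val := by
  rw [charBasis]
  exact congrFun (coe_basisOfLinearIndependentOfCardEqFinrank _ _) a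

end

section eigen
variable {ι V : Type*} [Fintype ι] [AddCommGroup V] [Module ℂ V]

lemma eigenspace_eq_span (b : Module.Basis ι ℂ V) (f : Module.End ℂ V) (lam : ι → ℂ)
    (hb : ∀ i, f (b i) = lam i • b i) (μ : ℂ) :
    f.eigenspace μ = Submodule.span ℂ (b '' {i | lam i = μ}) := by
  apply le_antisymm
  · intro x hx
    have hx' : f x = μ • x := Module.End.mem_eigenspace_iff.mp hx
    have hxr : x = ∑ i, b.repr x i • b i := (b.sum_repr x).symm
    have hfx : f x = ∑ i, (lam i * b.repr x i) • b i := by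
      conv_lhs => rw [hxr]
      rw [map_sum]
      exact Finset.sum_congr rfl fun i _ => by
        rw [map_smul, hb i, smul_smul, mul_comm]
    have hmx : μ • x = ∑ i, (μ * b.repr x i) • b i := by
      conv_lhs => rw [hxr, Finset.smul_sum]
      exact Finset.sum_congr rfl fun i _ => by rw [smul_smul]
    have hs : ∑ i, (lam i * b.repr x i) • b i = ∑ i, (μ * b.repr x i) • b i := by
      rw [← hfx, hx', hmx]
    have key : ∀ i, lam i * b.repr x i = μ * b.repr x i := by
      have hL := b.repr_sum_self (fun i => lam i * b.repr x i)
      have hR := b.repr_sum_self (fun i => μ * b.repr x i)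
      intro i
      calc lam i * b.repr x i = b.repr (∑ i, (lam i * b.repr x i) • b i) i := by rw [hL]
        _ = b.repr (∑ i, (μ * b.repr x i) • b i) i := by rw [hs]
        _ = μ * b.repr x i := by rw [hR]
    have hxs : x = ∑ i ∈ Finset.univ.filter (fun i => lam i = μ), b.repr x i • b i := by
      conv_lhs => rw [hxr]
      rw [Finset.sum_filter]
      apply Finset.sum_congr rfl
      intro i _
      split_ifs with h
      · rfl
      · have := key i
        have hz : b.repr x i = 0 := by
          by_contra hnz
          exact h (mul_right_cancel₀ hnz this)
        simp [hz]
    rw [hxs]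
    apply Submodule.sum_mem
    intro i hi
    exact Submodule.smul_mem _ _ (Submodule.subset_span
      ⟨i, Finset.mem_filter.mp hi |>.2, rfl⟩)
  · rw [Submodule.span_le]
    rintro _ ⟨i, hi, rfl⟩
    exact Module.End.mem_eigenspace_iff.mpr (by rw [hb i, hi])

lemma finrank_span_basis_image (b : Module.Basis ι ℂ V) (T : Set ι) :
    Module.finrank ℂ (Submodule.span ℂ (b '' T)) = T.ncard := by
  haveI : Fintype (b '' T) := (Set.toFinite _).fintype
  have hli : LinearIndependent ℂ ((↑) : (b '' T) → V) := by
    have h1 : LinearIndependent ℂ (fun i : T => b i) :=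
      b.linearIndependent.comp _ Subtype.val_injective
    have h2 := h1.linearIndepOn_id
    have himg : Set.range (fun i : T => b i) = b '' T := (Set.image_eq_range _ _).symm
    rwa [himg] at h2
  rw [finrank_span_set_eq_card hli, ← Set.ncard_eq_toFinset_card',
    Set.ncard_image_of_injective _ b.injective]

end eigen

-- eigen equation lemma
lemma adj_eigen {p : ℕ} [NeZero p] (X : SimpleGraph (ZMod p)) [DecidableRel X.Adj]
    (S : Set (ZMod p)) (hS : ∀ i j : ZMod p, X.Adj i j ↔ j - i ∈ S)
    {ω : ℂ} (hω : IsPrimitiveRoot ω p) (a : ZMod p) :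
    Matrix.toLin' (X.adjMatrix ℂ) (charBasis hω a) =
      (∑ s ∈ (Set.toFinite S).toFinset, ω ^ ((a * s).val)) • charBasis hω a := by
  funext i
  rw [Matrix.toLin'_apply, SimpleGraph.adjMatrix_mulVec_apply]
  have hnb : X.neighborFinset i = (Set.toFinite S).toFinset.image (fun s => i + s) := by
    ext j
    rw [SimpleGraph.mem_neighborFinset, hS i j, Finset.mem_image]
    constructor
    · intro h; exact ⟨j - i, (Set.Finite.mem_toFinset _).mpr h, by ring⟩
    · rintro ⟨s, hs, rfl⟩
      simpa using (Set.Finite.mem_toFinset _).mp hs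
  rw [hnb, Finset.sum_image (fun x _ y _ h => by simpa using h)]
  rw [charBasis_apply hω]
  simp only [Pi.smul_apply, smul_eq_mul, Finset.sum_mul]
  apply Finset.sum_congr rfl
  intro s _
  rw [mul_add, e_add hω]
  ring

/-- For a nontrivial circulant `p`-graph `X` of type `k = |E|`, viewed through its complex
adjacency matrix `d_X`: every eigenspace of `d_X` other than the line spanned by the
all-ones vector has dimension `k`, and `d_X` has exactly `(p−1)/k + 1` distinct
eigenvalues. -/
theorem stmt13 {p : ℕ} [Fact p.Prime] [NeZero p]
    (X : SimpleGraph (ZMod p)) [DecidableRel X.Adj] (S : Set (ZMod p))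
    (hS : ∀ i j : ZMod p, X.Adj i j ↔ j - i ∈ S)
    (hne : S.Nonempty) (hnc : S ≠ {x : ZMod p | x ≠ 0})
    (E : Subgroup (ZMod p)ˣ)
    (hE : ∀ a : (ZMod p)ˣ, a ∈ E ↔ (fun s => (a : ZMod p) * s) '' S = S)
    (k : ℕ) (hk : k = Nat.card E) :
    (∀ μ : ℂ,
      Module.End.HasEigenvalue (Matrix.toLin' (X.adjMatrix ℂ)) μ →
      Module.End.eigenspace (Matrix.toLin' (X.adjMatrix ℂ)) μ ≠
        Submodule.span ℂ {(fun _ => 1 : ZMod p → ℂ)} →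
      Module.finrank ℂ (Module.End.eigenspace (Matrix.toLin' (X.adjMatrix ℂ)) μ) = k) ∧
    {μ : ℂ | Module.End.HasEigenvalue (Matrix.toLin' (X.adjMatrix ℂ)) μ}.ncard =
      (p - 1) / k + 1 := by
  classical
  have hp : p.Prime := Fact.out
  have hω : IsPrimitiveRoot (Complex.exp (2 * Real.pi * Complex.I / p)) p :=
    Complex.isPrimitiveRoot_exp p (NeZero.ne p)
  set ω : ℂ := Complex.exp (2 * Real.pi * Complex.I / p) with hωdef
  set f : Module.End ℂ (ZMod p → ℂ) := Matrix.toLin' (X.adjMatrix ℂ) with hfdef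
  set b : Module.Basis (ZMod p) ℂ (ZMod p → ℂ) := charBasis hω with hbdef
  set Sf : Finset (ZMod p) := (Set.toFinite S).toFinset with hSfdef
  have hmemSf : ∀ t, t ∈ Sf ↔ t ∈ S := fun t => Set.Finite.mem_toFinset _
  have hcoeSf : (Sf : Set (ZMod p)) = S := Set.Finite.coe_toFinset _
  have h0S : (0 : ZMod p) ∉ S := by
    intro h
    exact X.loopless.irrefl 0 ((hS 0 0).mpr (by simpa using h))
  have h0Sf : (0 : ZMod p) ∉ Sf := fun h => h0S ((hmemSf 0).mp h)
  have hSfne : Sf.Nonempty := by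
    obtain ⟨s, hs⟩ := hne
    exact ⟨s, (hmemSf s).mpr hs⟩
  have hSfcard : Sf.card ≠ 0 := Finset.card_ne_zero_of_mem hSfne.choose_spec
  set lam : ZMod p → ℂ := fun a => ∑ s ∈ Sf, ω ^ ((a * s).val) with hlamdef
  have heig : ∀ a, f (b a) = lam a • b a := fun a => adj_eigen X S hS hω a
  -- lam 0 = card
  have hlam0 : lam 0 = (Sf.card : ℂ) := by
    simp [hlamdef]
  -- image description for a ≠ 0
  have hlam_img : ∀ a : ZMod p, a ≠ 0 →
      lam a = ∑ t ∈ Sf.image (fun s => a * s), ω ^ t.val := by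
    intro a ha
    rw [Finset.sum_image]
    intro x _ y _ h
    exact mul_left_cancel₀ ha h
  have h0img : ∀ a : ZMod p, a ≠ 0 → (0 : ZMod p) ∉ Sf.image (fun s => a * s) := by
    intro a ha h
    obtain ⟨s, hs, hh⟩ := Finset.mem_image.mp h
    rcases mul_eq_zero.mp hh with h1 | h1
    · exact ha h1
    · exact h0Sf (h1 ▸ hs)
  -- lam a ≠ lam 0 for a ≠ 0
  have hlam_ne0 : ∀ a : ZMod p, a ≠ 0 → lam a ≠ lam 0 := by
    intro a ha h
    rw [hlam_img a ha, hlam0] at h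
    exact sum_ne_card hp hω (h0img a ha) hSfcard h
  -- coe of image
  have himg : ∀ c : ZMod p, ((Sf.image (fun s => c * s) : Finset (ZMod p)) : Set (ZMod p)) =
      (fun s => c * s) '' S := by
    intro c
    rw [Finset.coe_image, hcoeSf]
  -- the unit relation
  have hg : ∀ u w : (ZMod p)ˣ, lam u = lam w ↔ w⁻¹ * u ∈ E := by
    intro u w
    have hu : (u : ZMod p) ≠ 0 := Units.ne_zero u
    have hw : (w : ZMod p) ≠ 0 := Units.ne_zero w
    constructor
    · intro h
      rw [hlam_img _ hu, hlam_img _ hw] at h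
      have hAB := finset_eq_of_sum_eq hp hω (h0img _ hu) (h0img _ hw) h
      have hset : (fun s => (u : ZMod p) * s) '' S = (fun s => (w : ZMod p) * s) '' S := by
        rw [← himg, ← himg, hAB]
      rw [hE]
      have : (fun s => ((w⁻¹ : (ZMod p)ˣ) : ZMod p) * s) '' ((fun s => (u : ZMod p) * s) '' S)
          = (fun s => ((w⁻¹ * u : (ZMod p)ˣ) : ZMod p) * s) '' S := by
        rw [Set.image_image]
        apply Set.image_congr
        intro s _
        push_cast
        ring
      rw [hset, Set.image_image] at this
      rw [← this]
      have : ∀ s : ZMod p, ((w⁻¹ : (ZMod p)ˣ) : ZMod p) * ((w : ZMod p) * s) = s := by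
        intro s
        rw [← mul_assoc]
        norm_cast
        rw [inv_mul_cancel]
        simp
      simp only [this]
      exact Set.image_id S
    · intro h
      have hset : (fun s => ((w⁻¹ * u : (ZMod p)ˣ) : ZMod p) * s) '' S = S := (hE _).mp h
      have hset2 : (fun s => (u : ZMod p) * s) '' S = (fun s => (w : ZMod p) * s) '' S := by
        conv_rhs => rw [← hset]
        rw [Set.image_image]
        apply Set.image_congr
        intro s _
        have hww : (↑w : ZMod p) * ↑(w⁻¹ * u) = ↑u := by
          rw [← Units.val_mul, mul_inv_cancel_left]
        rw [← mul_assoc, hww]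
      have hAB : Sf.image (fun s => (u : ZMod p) * s) = Sf.image (fun s => (w : ZMod p) * s) :=
        Finset.coe_injective (by rw [himg, himg, hset2])
      rw [hlam_img _ hu, hlam_img _ hw, hAB]
  -- fibers over nonzero values
  have hfiber : ∀ au : (ZMod p)ˣ,
      {i : ZMod p | lam i = lam au} =
        (fun u : (ZMod p)ˣ => ((au * u : (ZMod p)ˣ) : ZMod p)) '' (E : Set (ZMod p)ˣ) := by
    intro au
    ext i
    simp only [Set.mem_setOf_eq, Set.mem_image]
    constructor
    · intro h
      have hi0 : i ≠ 0 := by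
        rintro rfl
        exact hlam_ne0 au (Units.ne_zero au) h.symm
      set iu : (ZMod p)ˣ := (Ne.isUnit hi0).unit with hiu
      have hicoe : (iu : ZMod p) = i := (Ne.isUnit hi0).unit_spec
      have : lam iu = lam au := by rw [hicoe]; exact h
      refine ⟨au⁻¹ * iu, (hg iu au).mp this, ?_⟩
      rw [← mul_assoc, mul_inv_cancel, one_mul, hicoe]
    · rintro ⟨u, hu, rfl⟩
      have : au⁻¹ * (au * u) ∈ E := by rwa [← mul_assoc, inv_mul_cancel, one_mul]
      exact (hg (au * u) au).mpr this
  -- b 0 is the all-ones vector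
  have hb0 : b 0 = (fun _ => 1 : ZMod p → ℂ) := by
    rw [hbdef, charBasis_apply hω]
    funext j
    simp
  -- eigenspace description
  have hES : ∀ μ : ℂ, f.eigenspace μ = Submodule.span ℂ (b '' {i | lam i = μ}) :=
    eigenspace_eq_span b f lam heig
  -- eigenvalue iff in range
  have hEV : ∀ μ : ℂ, f.HasEigenvalue μ ↔ μ ∈ Set.range lam := by
    intro μ
    constructor
    · intro h
      by_contra hr
      have hempty : {i : ZMod p | lam i = μ} = ∅ := by
        ext i
        simp only [Set.mem_setOf_eq, Set.mem_empty_iff_false, iff_false]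
        intro hh
        exact hr ⟨i, hh⟩
      have := hES μ
      rw [hempty] at this
      simp only [Set.image_empty, Submodule.span_empty] at this
      exact h this
    · rintro ⟨a, rfl⟩
      exact Module.End.hasEigenvalue_of_hasEigenvector
        ⟨Module.End.mem_eigenspace_iff.mpr (heig a), b.ne_zero a⟩
  constructor
  · -- part 1
    intro μ hμ hμ1
    have hμ0 : μ ≠ lam 0 := by
      rintro rfl
      apply hμ1
      rw [hES]
      have : {i : ZMod p | lam i = lam 0} = {0} := by
        ext i
        simp only [Set.mem_setOf_eq, Set.mem_singleton_iff]
        constructor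
        · intro h
          by_contra hi
          exact hlam_ne0 i hi h
        · rintro rfl; rfl
      rw [this, Set.image_singleton, hb0]
    obtain ⟨a, ha⟩ := (hEV μ).mp hμ
    have ha0 : a ≠ 0 := by
      rintro rfl
      exact hμ0 ha.symm
    set au : (ZMod p)ˣ := (Ne.isUnit ha0).unit with hau
    have hacoe : (au : ZMod p) = a := (Ne.isUnit ha0).unit_spec
    have hμa : μ = lam au := by rw [hacoe, ha]
    rw [hES, hμa, hfiber au, finrank_span_basis_image]
    have hinj : Function.Injective (fun u : (ZMod p)ˣ => ((au * u : (ZMod p)ˣ) : ZMod p)) := by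
      intro x y h
      simp only at h
      have : au * x = au * y := Units.ext h
      exact mul_left_cancel this
    rw [Set.ncard_image_of_injective _ hinj, hk]
    rw [← Nat.card_coe_set_eq]
    simp
  · -- part 2
    have hset : {μ : ℂ | f.HasEigenvalue μ} = Set.range lam := Set.ext hEV
    set g : (ZMod p)ˣ → ℂ := fun u => lam u with hgdef
    have hrange : Set.range lam = insert (lam 0) (Set.range g) := by
      ext μ
      simp only [Set.mem_range, Set.mem_insert_iff]
      constructor
      · rintro ⟨a, rfl⟩
        by_cases ha : a = 0
        · left; rw [ha]
        · right
          exact ⟨(Ne.isUnit ha).unit, by rw [hgdef]; simp [(Ne.isUnit ha).unit_spec]⟩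
      · rintro (h | ⟨u, rfl⟩)
        · exact ⟨0, h.symm⟩
        · exact ⟨u, rfl⟩
    -- quotient counting
    have hsurj : Function.Surjective (QuotientGroup.mk : (ZMod p)ˣ → (ZMod p)ˣ ⧸ E) :=
      Quotient.exists_rep
    set g' : (ZMod p)ˣ ⧸ E → ℂ := Quotient.lift g (by
      intro u w h
      have h' : u⁻¹ * w ∈ E := QuotientGroup.leftRel_apply.mp h
      exact (hg u w).mpr (by simpa [mul_inv_rev] using E.inv_mem h')) with hg'def
    have hcomp : g = g' ∘ (QuotientGroup.mk : (ZMod p)ˣ → (ZMod p)ˣ ⧸ E) := rfl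
    have hg'inj : Function.Injective g' := by
      intro x y
      induction x using Quotient.ind
      induction y using Quotient.ind
      rename_i u w
      intro h
      have h2 : lam u = lam w := h
      exact Quotient.sound (QuotientGroup.leftRel_apply.mpr
        (by simpa [mul_inv_rev] using E.inv_mem ((hg u w).mp h2)))
    have hrg : Set.range g = Set.range g' := by
      rw [hcomp, Set.range_comp, hsurj.range_eq, Set.image_univ]
    have hcardq : Nat.card ((ZMod p)ˣ ⧸ E) = (p - 1) / k := by
      have h1 : Nat.card (ZMod p)ˣ = Nat.card ((ZMod p)ˣ ⧸ E) * Nat.card E :=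
        Subgroup.card_eq_card_quotient_mul_card_subgroup E
      have h2 : Nat.card (ZMod p)ˣ = p - 1 := by
        rw [Nat.card_eq_fintype_card, ZMod.card_units_eq_totient, Nat.totient_prime hp]
      have hkne : (0:ℕ) < Nat.card E := Nat.card_pos
      rw [hk]
      rw [h2] at h1
      rw [h1, Nat.mul_div_cancel _ hkne]
    have hfin : (Set.range g).Finite := Set.finite_range g
    have hnotmem : lam 0 ∉ Set.range g := by
      rintro ⟨u, hu⟩
      exact hlam_ne0 u (Units.ne_zero u) hu
    rw [hset, hrange, Set.ncard_insert_of_notMem hnotmem hfin, hrg]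
    have hcg : (Set.range g').ncard = Nat.card ((ZMod p)ˣ ⧸ E) := by
      rw [← Nat.card_coe_set_eq, Nat.card_range_of_injective hg'inj]
    rw [hcg, hcardq]
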